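/- Deleting the first letter gives a bijection between {π ∈ S_n : π avoids 23-1, π_1 = 1, π_2 = b} and {τ ∈ S_{n−1} : τ avoids 23-1, τ_1 = b−1}, for any 2 ≤ b ≤ n. -/

import Mathlib

/-- The positions of the prefix indices `R` inside `Fin n`. -/
def prefIndices {n k : ℕ} (h : k ≤ n) (R : Finset (Fin k)) : Finset (Fin n) :=
  R.map (Fin.castLEEmb h)

/-- The deletion map `d_R`: delete the letters of `π` at the (prefix) positions in `R`
and reduce, yielding a permutation of length `n - |R|`. -/
def deletePerm {n k : ℕ} (h : k ≤ n) (R : Finset (Fin k)) (π : Equiv.Perm (Fin n)) :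
    Equiv.Perm (Fin (n - R.card)) :=
  ((prefIndices h R)ᶜ.orderIsoOfFin
      (by simp [prefIndices, Finset.card_compl])).toEquiv.trans
    ((π.subtypeEquiv (fun x => by
        simp [prefIndices, Finset.mem_compl, Finset.mem_image])).trans
      (((prefIndices h R).image π)ᶜ.orderIsoOfFin
        (by simp [prefIndices, Finset.card_compl,
              Finset.card_image_of_injective _ π.injective])).toEquiv.symm)

/-- Containment of 23-1. -/
def Contains23d1 {n : ℕ} (π : Equiv.Perm (Fin n)) : Prop :=
  ∃ (i j : Fin n) (h : (i : ℕ) + 1 < n), (i : ℕ) + 1 < (j : ℕ) ∧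
    π j < π i ∧ π i < π ⟨(i : ℕ) + 1, h⟩

lemma key23 {n m : ℕ} (hn : 2 ≤ n) : ∀ (s : Finset (Fin n)), s = {⟨0, by omega⟩} →
    ∀ (h : sᶜ.card = m) (j : Fin m),
      ((sᶜ.orderIsoOfFin h j : Fin n) : ℕ) = (j : ℕ) + 1 := by
  rintro s rfl h j
  have hm : m = n - 1 := by
    rw [← h, Finset.card_compl]; simp
  subst hm
  rw [Finset.coe_orderIsoOfFin_apply]
  have hu : (OrderEmbedding.ofStrictMono
      (fun j : Fin (n-1) => (⟨(j:ℕ)+1, by omega⟩ : Fin n))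
      (fun a b hab => Fin.mk_lt_mk.mpr (Nat.succ_lt_succ hab))) =
      (({(⟨0, by omega⟩ : Fin n)} : Finset (Fin n))ᶜ).orderEmbOfFin h := by
    apply Finset.orderEmbOfFin_unique'
    intro x
    simp only [OrderEmbedding.coe_ofStrictMono, Finset.mem_compl, Finset.mem_singleton]
    intro hx
    have := congrArg Fin.val hx
    change (x:ℕ) + 1 = 0 at this
    omega
  rw [← hu]
  rfl

lemma symm_key23 {n m : ℕ} (hn : 2 ≤ n) (s : Finset (Fin n)) (hs : s = {⟨0, by omega⟩})
    (h : sᶜ.card = m) (x : {a // a ∈ sᶜ}) :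
    ((((sᶜ.orderIsoOfFin h).toEquiv.symm x : Fin m)) : ℕ) + 1 = ((x : Fin n) : ℕ) := by
  have h2 : (sᶜ.orderIsoOfFin h).toEquiv.symm x = (sᶜ.orderIsoOfFin h).symm x := rfl
  rw [h2]
  have := key23 hn s hs h ((sᶜ.orderIsoOfFin h).symm x)
  rw [OrderIso.apply_symm_apply] at this
  exact this.symm

lemma deletePerm_apply {n : ℕ} (hn : 2 ≤ n) (π : Equiv.Perm (Fin n))
    (hπ : π ⟨0, Nat.lt_of_lt_of_le two_pos hn⟩ = ⟨0, Nat.lt_of_lt_of_le two_pos hn⟩)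
    (v : ℕ)
    (hv : v < n - ({(⟨0, Nat.lt_of_lt_of_le two_pos hn⟩ : Fin n)} : Finset (Fin n)).card)
    (hv' : v + 1 < n) :
    ((deletePerm (le_refl n) {(⟨0, Nat.lt_of_lt_of_le two_pos hn⟩ : Fin n)} π ⟨v, hv⟩ : ℕ)) + 1
      = (π ⟨v + 1, hv'⟩ : ℕ) := by
  have hpre : prefIndices (le_refl n)
      ({(⟨0, Nat.lt_of_lt_of_le two_pos hn⟩ : Fin n)} : Finset (Fin n))
      = {⟨0, by omega⟩} := rfl
  have himg : Finset.image (⇑π) (prefIndices (le_refl n)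
      ({(⟨0, Nat.lt_of_lt_of_le two_pos hn⟩ : Fin n)} : Finset (Fin n)))
      = ({⟨0, by omega⟩} : Finset (Fin n)) := by
    rw [hpre, Finset.image_singleton, hπ]
  unfold deletePerm
  simp only [Equiv.trans_apply, RelIso.coe_fn_toEquiv]
  rw [symm_key23 hn _ himg]
  simp only [Equiv.subtypeEquiv_apply]
  have hcong : ∀ a b : Fin n, a = b → (π a : ℕ) = (π b : ℕ) := fun a b h => by rw [h]
  apply hcong
  apply Fin.ext
  exact key23 hn _ hpre _ ⟨v, hv⟩

def liftPerm {n : ℕ} (hn : 2 ≤ n) (τ : Equiv.Perm (Fin (n - 1))) : Equiv.Perm (Fin n) :=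
  (finCongr (by omega : n = (n-1)+1)).trans
    ((Equiv.Perm.decomposeFin.symm ((0 : Fin (n-1+1)), τ)).trans
      (finCongr (by omega : (n-1)+1 = n)))

lemma liftPerm_zero {n : ℕ} (hn : 2 ≤ n) (τ : Equiv.Perm (Fin (n - 1))) (h : 0 < n) :
    liftPerm hn τ ⟨0, h⟩ = ⟨0, h⟩ := by
  apply Fin.ext
  simp [liftPerm]

lemma liftPerm_succ {n : ℕ} (hn : 2 ≤ n) (τ : Equiv.Perm (Fin (n - 1))) (v : ℕ)
    (hv : v + 1 < n) (hv' : v < n - 1) :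
    ((liftPerm hn τ ⟨v + 1, hv⟩ : Fin n) : ℕ) = (τ ⟨v, hv'⟩ : ℕ) + 1 := by
  simp only [liftPerm, Equiv.trans_apply, finCongr_apply]
  have h1 : (Fin.cast (by omega : n = (n-1)+1) ⟨v+1, hv⟩) = (⟨v, hv'⟩ : Fin (n-1)).succ :=
    Fin.ext (by simp)
  rw [h1, Equiv.Perm.decomposeFin_symm_apply_succ]
  simp

lemma liftPerm_zero' {n : ℕ} (hn : 2 ≤ n) (τ : Equiv.Perm (Fin (n - 1))) (x : Fin n)
    (hx : (x : ℕ) = 0) : ((liftPerm hn τ x : Fin n) : ℕ) = 0 := by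
  have hxe : x = ⟨0, by omega⟩ := Fin.ext hx
  rw [hxe, liftPerm_zero hn τ (by omega)]

lemma liftPerm_pos {n : ℕ} (hn : 2 ≤ n) (τ : Equiv.Perm (Fin (n - 1))) (x : Fin n)
    (w : ℕ) (hw : (x : ℕ) = w + 1) (h' : w < n - 1) :
    ((liftPerm hn τ x : Fin n) : ℕ) = (τ ⟨w, h'⟩ : ℕ) + 1 := by
  have hxe : x = ⟨w + 1, by omega⟩ := Fin.ext hw
  rw [hxe]
  exact liftPerm_succ hn τ w (by omega) h'

attribute [irreducible] liftPerm

/-- Deleting the first letter is a bijection from the `23-1`-avoiding permutations of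
length `n` with `π₁ = 1, π₂ = b` to those of length `n-1` with first letter `b-1`
(letters written 1-based; here encoded 0-based in `Fin`). -/
theorem stmt13 {n b : ℕ} (hb : 2 ≤ b) (hbn : b ≤ n) :
    Set.BijOn (deletePerm (le_refl n) {(⟨0, by omega⟩ : Fin n)})
      {π : Equiv.Perm (Fin n) | ¬ Contains23d1 π ∧
        π ⟨0, by omega⟩ = ⟨0, by omega⟩ ∧ π ⟨1, by omega⟩ = ⟨b - 1, by omega⟩}
      {τ : Equiv.Perm (Fin (n - ({(⟨0, by omega⟩ : Fin n)} : Finset (Fin n)).card)) |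
        ¬ Contains23d1 τ ∧
        τ ⟨0, by simp only [Finset.card_singleton]; omega⟩ =
          ⟨b - 2, by simp only [Finset.card_singleton]; omega⟩} := by
  have hn : 2 ≤ n := hb.trans hbn
  have h0 : 0 < n := Nat.lt_of_lt_of_le two_pos hn
  have hcard : ({(⟨0, h0⟩ : Fin n)} : Finset (Fin n)).card = 1 := Finset.card_singleton _
  refine ⟨?_, ?_, ?_⟩
  · -- MapsTo
    rintro π ⟨hav, hπ0, hπ1⟩
    refine ⟨?_, ?_⟩
    · -- avoidance
      rintro ⟨i, j, h, hij, hlt1, hlt2⟩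
      rw [Fin.lt_def] at hlt1 hlt2
      have hi := i.isLt
      have hj := j.isLt
      have e1 := deletePerm_apply hn π hπ0 (i : ℕ) i.isLt (by omega)
      have e2 := deletePerm_apply hn π hπ0 (j : ℕ) j.isLt (by omega)
      have e3 := deletePerm_apply hn π hπ0 ((i : ℕ) + 1) h (by omega)
      try simp only [Fin.eta] at e1 e2
      apply hav
      refine ⟨⟨(i:ℕ)+1, by omega⟩, ⟨(j:ℕ)+1, by omega⟩, ?_, ?_, ?_, ?_⟩
      · try simp only [Fin.val_mk, Finset.card_singleton]
        omega
      · try simp only [Fin.val_mk, Finset.card_singleton]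
        omega
      · rw [Fin.lt_def]
        try simp only [Fin.val_mk, Finset.card_singleton]
        omega
      · rw [Fin.lt_def]
        try simp only [Fin.val_mk, Finset.card_singleton]
        omega
    · -- first letter b-2
      have e := deletePerm_apply hn π hπ0 0 (by omega) (by omega)
      have e2 : (π ⟨0+1, by omega⟩ : ℕ) = b - 1 := congrArg Fin.val hπ1
      apply Fin.ext
      show ((deletePerm (le_refl n) {(⟨0, h0⟩ : Fin n)} π) ⟨0, by omega⟩ : ℕ) = b - 2
      omega
  · -- InjOn
    rintro π₁ ⟨_, h10, _⟩ π₂ ⟨_, h20, _⟩ hEq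
    have hEq' : deletePerm (le_refl n) {(⟨0, h0⟩ : Fin n)} π₁
        = deletePerm (le_refl n) {(⟨0, h0⟩ : Fin n)} π₂ := hEq
    ext x
    rcases x with ⟨v, hv⟩
    cases v with
    | zero => exact congrArg Fin.val (h10.trans h20.symm)
    | succ w =>
      have hw : w < n - ({(⟨0, h0⟩ : Fin n)} : Finset (Fin n)).card := by omega
      have e1 := deletePerm_apply hn π₁ h10 w hw hv
      have e2 := deletePerm_apply hn π₂ h20 w hw hv
      rw [hEq'] at e1
      omega
  · -- SurjOn
    rintro τ ⟨hav, hτ0⟩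
    refine ⟨liftPerm hn τ, ⟨?_, ?_, ?_⟩, ?_⟩
    · -- avoidance of lift
      rintro ⟨i, j, h, hij, hlt1, hlt2⟩
      rw [Fin.lt_def] at hlt1 hlt2
      rcases Nat.eq_zero_or_pos (i : ℕ) with hi0 | hi0
      · have e0 := liftPerm_zero' hn τ i hi0
        omega
      · have hi := i.isLt
        have hj := j.isLt
        have hj0 : 0 < (j:ℕ) := by omega
        have ei := liftPerm_pos hn τ i ((i:ℕ)-1) (by omega) (by omega)
        have ej := liftPerm_pos hn τ j ((j:ℕ)-1) (by omega) (by omega)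
        have e3 := liftPerm_pos hn τ ⟨(i:ℕ)+1, h⟩ ((i:ℕ)-1+1)
          (by simp only [Fin.val_mk]; omega) (by omega)
        apply hav
        refine ⟨⟨(i:ℕ)-1, by omega⟩, ⟨(j:ℕ)-1, by omega⟩, ?_, ?_, ?_, ?_⟩
        · try simp only [Fin.val_mk, Finset.card_singleton]
          omega
        · try simp only [Fin.val_mk, Finset.card_singleton]
          omega
        · rw [Fin.lt_def]
          try simp only [Fin.val_mk, Finset.card_singleton]
          exact (by omega : ((τ (⟨(j:ℕ)-1, by omega⟩ : Fin (n-1)) : ℕ)) <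
            (τ (⟨(i:ℕ)-1, by omega⟩ : Fin (n-1)) : ℕ))
        · rw [Fin.lt_def]
          try simp only [Fin.val_mk, Finset.card_singleton]
          exact (by omega : ((τ (⟨(i:ℕ)-1, by omega⟩ : Fin (n-1)) : ℕ)) <
            (τ (⟨(i:ℕ)-1+1, by omega⟩ : Fin (n-1)) : ℕ))
    · exact liftPerm_zero hn τ h0
    · -- second letter
      apply Fin.ext
      have e := liftPerm_pos hn τ ⟨1, by omega⟩ 0 (by simp) (by omega)
      have e2 := congrArg Fin.val hτ0
      try simp only [Fin.val_mk] at e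
      try simp only [Fin.val_mk] at e2
      try simp only [Fin.val_mk]
      have e3 : (τ (⟨0, by omega⟩ : Fin (n-1)) : ℕ) = b - 2 := e2
      omega
    · -- deletePerm ∘ lift = τ
      ext x
      rcases x with ⟨v, hv⟩
      have hv1 : v + 1 < n := by omega
      have e1 := deletePerm_apply hn (liftPerm hn τ) (liftPerm_zero hn τ h0) v hv hv1
      have e2 := liftPerm_pos hn τ ⟨v+1, hv1⟩ v (by simp) (by omega)
      have e3 : (τ (⟨v, by omega⟩ : Fin (n-1)) : ℕ) = τ ⟨v, hv⟩ := rfl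
      omega
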